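/- Let n ≥ 2. If ℱ is an intersecting-union (IU) family of subsets of [n] = {1,...,n}, then |ℱ| ≤ 2^(n-2). -/

import Mathlib

open Finset

/-- A family no member of which sits together with its complement has at most
half of all subsets. -/
lemma aux_half (n : ℕ) (𝒢 : Finset (Finset (Fin n)))
    (h : ∀ S ∈ 𝒢, Sᶜ ∉ 𝒢) : 2 * 𝒢.card ≤ 2 ^ n := by
  have hinj : Function.Injective (compl : Finset (Fin n) → Finset (Fin n)) :=
    compl_injective
  have hdisj : Disjoint 𝒢 (𝒢.image compl) := by
    rw [Finset.disjoint_right]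
    intro S hS hS'
    obtain ⟨T, hT, rfl⟩ := Finset.mem_image.1 hS
    exact h T hT (by simpa using hS')
  have hcard : (𝒢 ∪ 𝒢.image compl).card ≤ 2 ^ n := by
    calc (𝒢 ∪ 𝒢.image compl).card ≤ (Finset.univ : Finset (Finset (Fin n))).card :=
          Finset.card_le_card (Finset.subset_univ _)
      _ = 2 ^ n := by simp [Finset.card_univ]
  rw [Finset.card_union_of_disjoint hdisj, Finset.card_image_of_injective _ hinj] at hcard
  omega

/-- An intersecting-union family of subsets of `[n]` has at most `2^(n-2)`
members. -/
theorem stmt_8 (n : ℕ) (hn : 2 ≤ n) (ℱ : Finset (Finset (Fin n)))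
    (hIU : ∀ A ∈ ℱ, ∀ B ∈ ℱ, A ∩ B ≠ ∅ ∧ A ∪ B ≠ Finset.univ) :
    ℱ.card ≤ 2 ^ (n - 2) := by
  classical
  set 𝒰 : Finset (Finset (Fin n)) :=
    Finset.univ.filter (fun S => ∃ A ∈ ℱ, A ⊆ S) with h𝒰
  set 𝒟 : Finset (Finset (Fin n)) :=
    Finset.univ.filter (fun S => ∃ A ∈ ℱ, S ⊆ A) with h𝒟
  have h𝒰up : IsUpperSet (↑𝒰 : Set (Finset (Fin n))) := by
    intro s t hst hs
    simp only [h𝒰, Finset.coe_filter, Set.mem_setOf_eq, Finset.mem_univ, true_and] at hs ⊢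
    obtain ⟨A, hA, hAs⟩ := hs
    exact ⟨A, hA, hAs.trans hst⟩
  have h𝒟low : IsLowerSet (↑𝒟 : Set (Finset (Fin n))) := by
    intro s t hts hs
    simp only [h𝒟, Finset.coe_filter, Set.mem_setOf_eq, Finset.mem_univ, true_and] at hs ⊢
    obtain ⟨A, hA, hAs⟩ := hs
    exact ⟨A, hA, hts.trans hAs⟩
  -- 𝒰 is intersecting, so it avoids complements
  have h𝒰half : 2 * 𝒰.card ≤ 2 ^ n := by
    apply aux_half
    intro S hS hS'
    simp only [h𝒰, Finset.mem_filter, Finset.mem_univ, true_and] at hS hS'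
    obtain ⟨A, hA, hAS⟩ := hS
    obtain ⟨B, hB, hBS⟩ := hS'
    have h1 : A ∩ B ≠ ∅ := (hIU A hA B hB).1
    apply h1
    rw [Finset.eq_empty_iff_forall_notMem]
    intro x hx
    have hxS : x ∈ S := hAS (Finset.mem_inter.1 hx).1
    have hxSc : x ∈ Sᶜ := hBS (Finset.mem_inter.1 hx).2
    simp at hxSc
    exact hxSc hxS
  have h𝒟half : 2 * 𝒟.card ≤ 2 ^ n := by
    apply aux_half
    intro S hS hS'
    simp only [h𝒟, Finset.mem_filter, Finset.mem_univ, true_and] at hS hS'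
    obtain ⟨A, hA, hSA⟩ := hS
    obtain ⟨B, hB, hSB⟩ := hS'
    have h2 : A ∪ B ≠ Finset.univ := (hIU A hA B hB).2
    apply h2
    rw [Finset.eq_univ_iff_forall]
    intro x
    by_cases hx : x ∈ S
    · exact Finset.mem_union.2 (Or.inl (hSA hx))
    · exact Finset.mem_union.2 (Or.inr (hSB (by simpa using hx)))
  have hsub : ℱ ⊆ 𝒰 ∩ 𝒟 := by
    intro A hA
    simp only [h𝒰, h𝒟, Finset.mem_inter, Finset.mem_filter, Finset.mem_univ, true_and]
    exact ⟨⟨A, hA, le_refl _⟩, ⟨A, hA, le_refl _⟩⟩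
  have hHK : 2 ^ Fintype.card (Fin n) * (𝒰 ∩ 𝒟).card ≤ 𝒰.card * 𝒟.card :=
    h𝒰up.card_inter_le_finset h𝒟low
  rw [Fintype.card_fin] at hHK
  have hF : ℱ.card ≤ (𝒰 ∩ 𝒟).card := Finset.card_le_card hsub
  have key : 4 * (2 ^ n * ℱ.card) ≤ 2 ^ n * 2 ^ n := by
    calc 4 * (2 ^ n * ℱ.card) ≤ 4 * (2 ^ n * (𝒰 ∩ 𝒟).card) := by
          exact Nat.mul_le_mul_left _ (Nat.mul_le_mul_left _ hF)
      _ ≤ 4 * (𝒰.card * 𝒟.card) := Nat.mul_le_mul_left _ hHK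
      _ = (2 * 𝒰.card) * (2 * 𝒟.card) := by ring
      _ ≤ 2 ^ n * 2 ^ n := Nat.mul_le_mul h𝒰half h𝒟half
  have h4 : 2 ^ n = 4 * 2 ^ (n - 2) := by
    obtain ⟨m, rfl⟩ : ∃ m, n = m + 2 := ⟨n - 2, by omega⟩
    simp only [Nat.add_sub_cancel, pow_add]
    norm_num [mul_comm]
  rw [h4] at key
  have hpos : 0 < 2 ^ (n - 2) := by positivity
  nlinarith [key, hpos]
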